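/- For every connected graph G of even order n ≥ 2, the proximity satisfies π(G) ≤ (n+1)/4 + 1/(4(n-1)). -/

import Mathlib

open Finset SimpleGraph
namespace ProxAux
variable {V : Type*}


/-- distance to i-th vertex of a walk is ≤ i -/
lemma dist_getVert_le (H : SimpleGraph V) (hH : H.Connected) {u v : V} (p : H.Walk u v) :
    ∀ i, H.dist u (p.getVert i) ≤ i := by
  intro i
  induction i with
  | zero => simp [SimpleGraph.Walk.getVert_zero]
  | succ i ih =>
      by_cases hi : i < p.length
      · calc H.dist u (p.getVert (i+1)) ≤
            H.dist u (p.getVert i) + H.dist (p.getVert i) (p.getVert (i+1)) :=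
              hH.dist_triangle
          _ ≤ i + 1 := by
              have : H.dist (p.getVert i) (p.getVert (i+1)) = 1 :=
                (SimpleGraph.dist_eq_one_iff_adj).2 (p.adj_getVert_succ hi)
              omega
      · have h1 : p.getVert (i+1) = v := p.getVert_of_length_le (by omega)
        have := SimpleGraph.dist_le p
        rw [h1]
        omega

lemma dist_getVert_le' (H : SimpleGraph V) (hH : H.Connected) {u v : V} (p : H.Walk u v)
    {i : ℕ} (hi : i ≤ p.length) : H.dist (p.getVert i) v ≤ p.length - i := by
  have := dist_getVert_le H hH p.reverse (p.length - i)
  rw [SimpleGraph.Walk.getVert_reverse] at this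
  have h2 : p.length - (p.length - i) = i := by omega
  rw [h2] at this
  rw [SimpleGraph.dist_comm]
  exact this


lemma tree_path_length {T : SimpleGraph V} (hT : T.IsTree) {u v : V}
    (p : T.Walk u v) (hp : p.IsPath) : p.length = T.dist u v := by
  obtain ⟨q, hq, hlen⟩ := (hT.isConnected u v).exists_path_of_dist
  rw [(hT.existsUnique_path u v).unique hp hq]
  exact hlen

lemma tree_dist_ne {T : SimpleGraph V} (hT : T.IsTree) {b c : V} (hbc : T.Adj b c) (x : V) :
    T.dist x b ≠ T.dist x c := by
  classical
  intro h
  obtain ⟨p, hp, hlen⟩ := (hT.isConnected x b).exists_path_of_dist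
  by_cases hc : c ∈ p.support
  · have hsplit := p.take_spec hc
    have h1 : (p.takeUntil c hc).length = T.dist x c := tree_path_length hT _ (hp.takeUntil hc)
    have h2 : (p.dropUntil c hc).length = T.dist c b := tree_path_length hT _ (hp.dropUntil hc)
    have h3 : (p.takeUntil c hc).length + (p.dropUntil c hc).length = p.length := by
      have := congrArg SimpleGraph.Walk.length hsplit
      rwa [SimpleGraph.Walk.length_append] at this
    have h4 : T.dist c b = 1 := (SimpleGraph.dist_eq_one_iff_adj).2 hbc.symm
    omega
  · have hq : (SimpleGraph.Walk.cons hbc.symm p.reverse).IsPath := by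
      rw [SimpleGraph.Walk.cons_isPath_iff]
      refine ⟨hp.reverse, by simpa using hc⟩
    have hlen2 := tree_path_length hT _ hq
    rw [SimpleGraph.Walk.length_cons, SimpleGraph.Walk.length_reverse] at hlen2
    have hcomm : T.dist c x = T.dist x c := SimpleGraph.dist_comm
    omega

lemma tree_dist_dichotomy {T : SimpleGraph V} (hT : T.IsTree) {b c : V} (hbc : T.Adj b c)
    (x : V) : T.dist c x = T.dist b x + 1 ∨ T.dist b x = T.dist c x + 1 := by
  have h1 : T.dist c x ≤ T.dist c b + T.dist b x := hT.isConnected.dist_triangle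
  have h2 : T.dist b x ≤ T.dist b c + T.dist c x := hT.isConnected.dist_triangle
  have h3 : T.dist c b = 1 := (SimpleGraph.dist_eq_one_iff_adj).2 hbc.symm
  have h4 : T.dist b c = 1 := (SimpleGraph.dist_eq_one_iff_adj).2 hbc
  have h5 : T.dist x b ≠ T.dist x c := tree_dist_ne hT hbc x
  have hc1 : T.dist x b = T.dist b x := SimpleGraph.dist_comm
  have hc2 : T.dist x c = T.dist c x := SimpleGraph.dist_comm
  omega


lemma exists_parent {T : SimpleGraph V} (hT : T.IsTree) {c w : V} (hw : w ≠ c) :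
    ∃ b, T.Adj c b ∧ T.dist c w = T.dist b w + 1 := by
  obtain ⟨p, hp, hlen⟩ := (hT.isConnected c w).exists_path_of_dist
  have hd : 0 < T.dist c w := hT.isConnected.pos_dist_of_ne (Ne.symm hw)
  have hlpos : 0 < p.length := by omega
  refine ⟨p.getVert 1, ?_, ?_⟩
  · have := p.adj_getVert_succ hlpos
    simpa [SimpleGraph.Walk.getVert_zero] using this
  · have h1 : T.dist (p.getVert 1) w ≤ p.length - 1 :=
      dist_getVert_le' T hT.isConnected p (by omega)
    have h2 : T.dist c w ≤ T.dist c (p.getVert 1) + T.dist (p.getVert 1) w :=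
      hT.isConnected.dist_triangle
    have h3 : T.dist c (p.getVert 1) ≤ 1 := dist_getVert_le T hT.isConnected p 1
    omega

lemma parent_unique {T : SimpleGraph V} (hT : T.IsTree) {c b b' w : V}
    (hb : T.Adj c b) (hb' : T.Adj c b')
    (hwb : T.dist c w = T.dist b w + 1) (hwb' : T.dist c w = T.dist b' w + 1) : b = b' := by
  obtain ⟨q, hq, hqlen⟩ := (hT.isConnected b w).exists_path_of_dist
  obtain ⟨q', hq', hqlen'⟩ := (hT.isConnected b' w).exists_path_of_dist
  have hcq : ∀ {y : V} (r : T.Walk y w) (hr : r.IsPath), r.length = T.dist y w →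
      T.dist c w = T.dist y w + 1 → c ∉ r.support := by
    classical
    intro y r hr hrlen hdy hcsup
    have hsplit := r.take_spec hcsup
    have h1 : (r.takeUntil c hcsup).length = T.dist y c := tree_path_length hT _ (hr.takeUntil hcsup)
    have h2 : (r.dropUntil c hcsup).length = T.dist c w := tree_path_length hT _ (hr.dropUntil hcsup)
    have h3 : (r.takeUntil c hcsup).length + (r.dropUntil c hcsup).length = r.length := by
      have := congrArg SimpleGraph.Walk.length hsplit
      rwa [SimpleGraph.Walk.length_append] at this
    omega
  have hP1 : (SimpleGraph.Walk.cons hb q).IsPath := by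
    rw [SimpleGraph.Walk.cons_isPath_iff]
    exact ⟨hq, hcq q hq hqlen hwb⟩
  have hP2 : (SimpleGraph.Walk.cons hb' q').IsPath := by
    rw [SimpleGraph.Walk.cons_isPath_iff]
    exact ⟨hq', hcq q' hq' hqlen' hwb'⟩
  have heq := (hT.existsUnique_path c w).unique hP1 hP2
  have := congrArg (fun r : T.Walk c w => r.getVert 1) heq
  simpa [SimpleGraph.Walk.getVert_cons] using this

lemma branch_getVert {T : SimpleGraph V} (hT : T.IsTree) {c b w : V} (hb : T.Adj c b)
    (hw : T.dist c w = T.dist b w + 1) {q : T.Walk b w} (hqlen : q.length = T.dist b w)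
    {j : ℕ} (hj : j ≤ T.dist b w) :
    T.dist b (q.getVert j) = j ∧ T.dist c (q.getVert j) = T.dist b (q.getVert j) + 1 := by
  have h1 : T.dist b (q.getVert j) ≤ j := dist_getVert_le T hT.isConnected q j
  have h2 : T.dist (q.getVert j) w ≤ q.length - j :=
    dist_getVert_le' T hT.isConnected q (by omega)
  have h3 : T.dist b w ≤ T.dist b (q.getVert j) + T.dist (q.getVert j) w :=
    hT.isConnected.dist_triangle
  have h4 : T.dist c (q.getVert j) ≤ T.dist c b + T.dist b (q.getVert j) :=
    hT.isConnected.dist_triangle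
  have h5 : T.dist c w ≤ T.dist c (q.getVert j) + T.dist (q.getVert j) w :=
    hT.isConnected.dist_triangle
  have h6 : T.dist c b = 1 := (SimpleGraph.dist_eq_one_iff_adj).2 hb
  omega


section
variable [Fintype V] [DecidableEq V]

lemma dist_lt_card {H : SimpleGraph V} (hH : H.Connected) (u v : V) :
    H.dist u v < Fintype.card V := by
  obtain ⟨p, hp, hlen⟩ := (hH u v).exists_path_of_dist
  rw [← hlen]
  exact hp.length_lt

lemma sum_eq_sum_card_filter {s : Finset V} (f : V → ℕ) (N : ℕ) (hf : ∀ w ∈ s, f w < N) :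
    ∑ w ∈ s, f w = ∑ k ∈ Finset.range N, (s.filter (fun w => k + 1 ≤ f w)).card := by
  simp_rw [Finset.card_filter]
  rw [Finset.sum_comm]
  refine Finset.sum_congr rfl ?_
  intro w hw
  have h1 : (Finset.range N).filter (fun k => k + 1 ≤ f w) = Finset.range (f w) := by
    ext k
    simp only [Finset.mem_filter, Finset.mem_range]
    have := hf w hw
    omega
  rw [← Finset.card_filter, h1, Finset.card_range]

lemma branch_count {T : SimpleGraph V} (hT : T.IsTree) {c b : V} (hb : T.Adj c b) (k : ℕ)
    (hne : (univ.filter (fun w => T.dist c w = T.dist b w + 1 ∧ k + 1 ≤ T.dist c w)).Nonempty) :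
    (univ.filter (fun w => T.dist c w = T.dist b w + 1 ∧ k + 1 ≤ T.dist c w)).card + k ≤
      (univ.filter (fun w => T.dist c w = T.dist b w + 1)).card := by
  obtain ⟨w, hw⟩ := hne
  simp only [Finset.mem_filter, Finset.mem_univ, true_and] at hw
  obtain ⟨hwb, hwk⟩ := hw
  obtain ⟨q, hq, hqlen⟩ := (hT.isConnected b w).exists_path_of_dist
  set A := univ.filter (fun x => T.dist c x = T.dist b x + 1 ∧ k + 1 ≤ T.dist c x) with hA
  set C := univ.filter (fun x => T.dist c x = T.dist b x + 1 ∧ T.dist c x ≤ k) with hCdef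
  have hmap : ∀ j ∈ Finset.range k, q.getVert j ∈ C := by
    intro j hj
    rw [Finset.mem_range] at hj
    have hg := branch_getVert hT hb hwb hqlen (j := j) (by omega)
    simp only [hCdef, Finset.mem_filter, Finset.mem_univ, true_and]
    omega
  have hinj : Set.InjOn (fun j => q.getVert j) (Finset.range k) := by
    intro j1 h1 j2 h2 heq
    simp only [Finset.coe_range, Set.mem_Iio] at h1 h2
    have hg1 := (branch_getVert hT hb hwb hqlen (j := j1) (by omega)).1
    have hg2 := (branch_getVert hT hb hwb hqlen (j := j2) (by omega)).1
    simp only at heq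
    rw [heq] at hg1
    omega
  have hCcard : k ≤ C.card := by
    have := Finset.card_le_card_of_injOn (fun j => q.getVert j) hmap hinj
    simpa using this
  have hdisj : Disjoint A C := by
    rw [Finset.disjoint_left]
    intro x hx hx'
    simp only [hA, hCdef, Finset.mem_filter] at hx hx'
    omega
  have hsub : A ∪ C ⊆ univ.filter (fun w => T.dist c w = T.dist b w + 1) := by
    intro x hx
    rcases Finset.mem_union.1 hx with h | h <;>
      simp only [hA, hCdef, Finset.mem_filter] at h <;>
      simp only [Finset.mem_filter, Finset.mem_univ, true_and] <;> tauto
  have := Finset.card_le_card hsub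
  rw [Finset.card_union_of_disjoint hdisj] at this
  omega

lemma branch_sum {T : SimpleGraph V} (hT : T.IsTree) {c b : V} (hb : T.Adj c b) :
    2 * ∑ w ∈ univ.filter (fun w => T.dist c w = T.dist b w + 1), T.dist c w ≤
      (univ.filter (fun w => T.dist c w = T.dist b w + 1)).card *
        ((univ.filter (fun w => T.dist c w = T.dist b w + 1)).card + 1) := by
  set B := univ.filter (fun w => T.dist c w = T.dist b w + 1) with hB
  set m := B.card with hm
  set N := Fintype.card V with hN
  have hstep1 : ∑ w ∈ B, T.dist c w = ∑ k ∈ Finset.range N, (B.filter (fun w => k + 1 ≤ T.dist c w)).card :=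
    sum_eq_sum_card_filter _ N (fun w _ => dist_lt_card hT.isConnected c w)
  have hstep2 : ∀ k, (B.filter (fun w => k + 1 ≤ T.dist c w)).card ≤ m - k := by
    intro k
    rw [hB, Finset.filter_filter]
    have hme : (univ.filter (fun w => T.dist c w = T.dist b w + 1)).card = m :=
      (hm.trans (congrArg Finset.card hB)).symm
    by_cases hne : (univ.filter (fun w => T.dist c w = T.dist b w + 1 ∧ k + 1 ≤ T.dist c w)).Nonempty
    · have := branch_count hT hb k hne
      omega
    · rw [Finset.not_nonempty_iff_eq_empty] at hne
      rw [hne]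
      simp
  have hmN : m ≤ N := by
    rw [hm, hN, hB]
    exact (Finset.card_filter_le _ _).trans (by simp)
  have hstep3 : ∑ k ∈ Finset.range N, (m - k) = ∑ k ∈ Finset.range m, (m - k) := by
    symm
    apply Finset.sum_subset
    · exact Finset.range_subset_range.2 hmN
    · intro k _ hk
      rw [Finset.mem_range, not_lt] at hk
      omega
  have hgauss : 2 * ∑ k ∈ Finset.range m, (m - k) = m * (m + 1) := by
    have hrefl : ∑ k ∈ Finset.range m, (m - k) = ∑ k ∈ Finset.range m, (k + 1) := by
      have := Finset.sum_range_reflect (fun j => j + 1) m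
      rw [← this]
      refine Finset.sum_congr rfl ?_
      intro j hj
      rw [Finset.mem_range] at hj
      omega
    rw [hrefl]
    have h3 := Finset.sum_range_succ' (fun i => i) m
    have h4 := Finset.sum_range_id_mul_two (m + 1)
    simp only [add_zero] at h3
    calc 2 * ∑ k ∈ Finset.range m, (k + 1) = (∑ i ∈ Finset.range (m + 1), i) * 2 := by
          rw [h3]; ring
      _ = (m + 1) * (m + 1 - 1) := h4
      _ = m * (m + 1) := by simp [mul_comm]
  calc 2 * ∑ w ∈ B, T.dist c w = 2 * ∑ k ∈ Finset.range N, (B.filter (fun w => k + 1 ≤ T.dist c w)).card := by rw [hstep1]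
    _ ≤ 2 * ∑ k ∈ Finset.range N, (m - k) := by
        apply Nat.mul_le_mul_left
        exact Finset.sum_le_sum (fun k _ => hstep2 k)
    _ = 2 * ∑ k ∈ Finset.range m, (m - k) := by rw [hstep3]
    _ = m * (m + 1) := hgauss


lemma median_branch_le {T : SimpleGraph V} (hT : T.IsTree) {c b : V} (hb : T.Adj c b)
    (hmed : ∑ w, T.dist c w ≤ ∑ w, T.dist b w) :
    2 * (univ.filter (fun w => T.dist c w = T.dist b w + 1)).card ≤ Fintype.card V := by
  have key : ∀ w : V, (T.dist b w : ℤ) - T.dist c w =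
      if T.dist c w = T.dist b w + 1 then -1 else 1 := by
    intro w
    rcases tree_dist_dichotomy hT hb.symm w with h | h <;> split_ifs with h' <;> omega
  have hsum : ∑ w : V, ((T.dist b w : ℤ) - T.dist c w) =
      ∑ w : V, (if T.dist c w = T.dist b w + 1 then (-1 : ℤ) else 1) :=
    Finset.sum_congr rfl (fun w _ => key w)
  rw [Finset.sum_sub_distrib, Finset.sum_ite, Finset.sum_const, Finset.sum_const] at hsum
  have hcards := Finset.card_filter_add_card_filter_not
    (s := (univ : Finset V)) (p := fun w => T.dist c w = T.dist b w + 1)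
  rw [Finset.card_univ] at hcards
  have hmed' : (0 : ℤ) ≤ ∑ w : V, ((T.dist b w : ℤ)) - ∑ w : V, ((T.dist c w : ℤ)) := by
    push_cast
    have : ((∑ w, T.dist c w : ℕ) : ℤ) ≤ ((∑ w, T.dist b w : ℕ) : ℤ) := by exact_mod_cast hmed
    push_cast at this
    omega
  rw [hsum] at hmed'
  simp only [smul_eq_mul, mul_one, mul_neg, mul_one, nsmul_eq_mul] at hmed'
  omega


lemma tree_transmission [Nonempty V] (T : SimpleGraph V) (hT : T.IsTree) {M : ℕ}
    (hcard : Fintype.card V = 2 * M) :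
    ∃ c : V, ∑ w, T.dist c w ≤ M * M := by
  classical
  obtain ⟨c, -, hc⟩ := Finset.exists_min_image (univ : Finset V)
    (fun x => ∑ w, T.dist x w) ⟨Classical.arbitrary V, mem_univ _⟩
  refine ⟨c, ?_⟩
  have hM1 : 1 ≤ M := by
    have : 0 < Fintype.card V := Fintype.card_pos
    omega
  set nbrs := univ.filter (fun b => T.Adj c b) with hnbrs
  set Bb : V → Finset V := fun b => univ.filter (fun w => T.dist c w = T.dist b w + 1) with hBb
  have hadj : ∀ b ∈ nbrs, T.Adj c b := by
    intro b hbm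
    simpa [hnbrs] using hbm
  have hdisj : ∀ b1 ∈ nbrs, ∀ b2 ∈ nbrs, b1 ≠ b2 → Disjoint (Bb b1) (Bb b2) := by
    intro b1 h1 b2 h2 hne
    rw [Finset.disjoint_left]
    intro w hw1 hw2
    simp only [hBb, Finset.mem_filter, Finset.mem_univ, true_and] at hw1 hw2
    exact hne (parent_unique hT (hadj b1 h1) (hadj b2 h2) hw1 hw2)
  have hcover : univ.filter (fun w => w ≠ c) = nbrs.biUnion Bb := by
    ext w
    simp only [Finset.mem_filter, Finset.mem_univ, true_and, Finset.mem_biUnion, hBb, hnbrs]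
    constructor
    · intro hw
      obtain ⟨b, hb, hcond⟩ := exists_parent hT hw
      exact ⟨b, hb, hcond⟩
    · rintro ⟨b, hb, hcond⟩ rfl
      rw [SimpleGraph.dist_self] at hcond
      omega
  -- sum decomposition
  have hsumdec : ∑ w, T.dist c w = ∑ b ∈ nbrs, ∑ w ∈ Bb b, T.dist c w := by
    rw [← Finset.sum_biUnion hdisj, ← hcover]
    symm
    apply Finset.sum_subset (Finset.filter_subset _ _)
    intro x _ hx
    simp only [Finset.mem_filter, Finset.mem_univ, true_and, not_not] at hx
    rw [hx, SimpleGraph.dist_self]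
  -- card decomposition
  have hcarddec : ∑ b ∈ nbrs, (Bb b).card = 2 * M - 1 := by
    rw [← Finset.card_biUnion hdisj, ← hcover]
    rw [Finset.filter_ne', Finset.card_erase_of_mem (mem_univ c), Finset.card_univ, hcard]
  have hbranchcard : ∀ b ∈ nbrs, (Bb b).card ≤ M := by
    intro b hbm
    have h2 := median_branch_le hT (hadj b hbm) (hc b (mem_univ b))
    rw [hcard] at h2
    have h3 : (Bb b).card = (univ.filter (fun w => T.dist c w = T.dist b w + 1)).card := by
      rw [hBb]
    omega
  have hbranchsum : ∀ b ∈ nbrs, 2 * ∑ w ∈ Bb b, T.dist c w ≤ (Bb b).card * ((Bb b).card + 1) :=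
    fun b hbm => branch_sum hT (hadj b hbm)
  -- final arithmetic
  have hmain : 2 * ∑ w, T.dist c w ≤ 2 * (M * M) := by
    rw [hsumdec, Finset.mul_sum]
    calc ∑ b ∈ nbrs, 2 * ∑ w ∈ Bb b, T.dist c w
        ≤ ∑ b ∈ nbrs, (Bb b).card * ((Bb b).card + 1) := Finset.sum_le_sum hbranchsum
      _ ≤ 2 * (M * M) := by
          by_cases hex : ∃ b0 ∈ nbrs, (Bb b0).card = M
          · obtain ⟨b0, hb0m, hb0⟩ := hex
            have hrest : ∑ b ∈ nbrs.erase b0, (Bb b).card = M - 1 := by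
              have h4 := Finset.add_sum_erase nbrs (fun b => (Bb b).card) hb0m
              beta_reduce at h4
              omega
            have hrestle : ∀ b ∈ nbrs.erase b0, (Bb b).card + 1 ≤ M := by
              intro b hbm
              have hle : (Bb b).card ≤ M - 1 := by
                rw [← hrest]
                exact Finset.single_le_sum (f := fun b => (Bb b).card)
                  (fun x _ => Nat.zero_le _) hbm
              omega
            calc ∑ b ∈ nbrs, (Bb b).card * ((Bb b).card + 1)
                = (Bb b0).card * ((Bb b0).card + 1) +
                  ∑ b ∈ nbrs.erase b0, (Bb b).card * ((Bb b).card + 1) :=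
                  (Finset.add_sum_erase nbrs _ hb0m).symm
              _ ≤ M * (M + 1) + ∑ b ∈ nbrs.erase b0, (Bb b).card * M := by
                  rw [hb0]
                  refine Nat.add_le_add_left (Finset.sum_le_sum ?_) _
                  intro b hbm
                  exact Nat.mul_le_mul_left _ (hrestle b hbm)
              _ = M * (M + 1) + (M - 1) * M := by
                  rw [← Finset.sum_mul, hrest]
              _ ≤ 2 * (M * M) := by
                  cases M with
                  | zero => simp
                  | succ t =>
                      simp only [Nat.succ_sub_one]
                      have : (t+1)*(t+1+1) + t*(t+1) = 2*((t+1)*(t+1)) := by ring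
                      omega
          · push_neg at hex
            calc ∑ b ∈ nbrs, (Bb b).card * ((Bb b).card + 1)
                ≤ ∑ b ∈ nbrs, (Bb b).card * M := by
                  refine Finset.sum_le_sum ?_
                  intro b hbm
                  have h1 := hbranchcard b hbm
                  have h2 := hex b hbm
                  exact Nat.mul_le_mul_left _ (by omega)
              _ = (2 * M - 1) * M := by rw [← Finset.sum_mul, hcarddec]
              _ ≤ 2 * (M * M) := by
                  cases M with
                  | zero => simp
                  | succ t =>
                      have h5 : 2 * (t+1) - 1 = 2*t+1 := by omega
                      rw [h5]
                      nlinarith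
  omega


lemma connected_delete_edge {H : SimpleGraph V} (hH : H.Connected) {v w : V}
    (hreach : (H \ SimpleGraph.fromEdgeSet {s(v, w)}).Reachable v w) :
    (H \ SimpleGraph.fromEdgeSet {s(v, w)}).Connected := by
  have key : ∀ {a b : V} (_ : H.Walk a b), (H \ SimpleGraph.fromEdgeSet {s(v, w)}).Reachable a b := by
    intro a b p
    induction p with
    | nil => exact SimpleGraph.Reachable.refl _
    | @cons x y z h q ih =>
        refine SimpleGraph.Reachable.trans ?_ ih
        by_cases hxy : s(x, y) = s(v, w)
        · rw [Sym2.eq_iff] at hxy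
          rcases hxy with ⟨rfl, rfl⟩ | ⟨rfl, rfl⟩
          · exact hreach
          · exact hreach.symm
        · refine SimpleGraph.Adj.reachable ?_
          rw [SimpleGraph.sdiff_adj]
          refine ⟨h, ?_⟩
          rw [SimpleGraph.fromEdgeSet_adj]
          intro hmem
          exact hxy hmem.1
  rw [SimpleGraph.connected_iff]
  exact ⟨fun a b => key ((hH.preconnected a b).some), hH.nonempty⟩

lemma exists_spanning_tree [Fintype V] (G : SimpleGraph V) (hG : G.Connected) :
    ∃ T ≤ G, T.IsTree := by
  classical
  suffices H : ∀ (k : ℕ) (G' : SimpleGraph V), G'.edgeSet.ncard ≤ k → G'.Connected →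
      ∃ T ≤ G', T.IsTree by
    exact H (G.edgeSet.ncard) G le_rfl hG
  intro k
  induction k with
  | zero =>
      intro G' hk hG'
      refine ⟨G', le_rfl, hG', ?_⟩
      intro v c hc
      have h3 := hc.three_le_length
      have hne : c.edges ≠ [] := by
        intro h
        have := c.length_edges
        rw [h] at this
        simp at this
        omega
      obtain ⟨e, he⟩ := List.exists_mem_of_ne_nil _ hne
      have hedge : e ∈ G'.edgeSet := c.edges_subset_edgeSet he
      have hfin : G'.edgeSet.Finite := Set.toFinite _
      have : G'.edgeSet = ∅ := by
        rw [← Set.ncard_eq_zero hfin]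
        omega
      rw [this] at hedge
      exact hedge
  | succ k ih =>
      intro G' hk hG'
      by_cases hac : G'.IsAcyclic
      · exact ⟨G', le_rfl, hG', hac⟩
      · simp only [SimpleGraph.IsAcyclic, not_forall, not_not] at hac
        obtain ⟨v, c, hc⟩ := hac
        have hne : c.edges ≠ [] := by
          intro h
          have h1 := c.length_edges
          have h3 := hc.three_le_length
          rw [h] at h1
          simp at h1
          omega
        obtain ⟨e, he⟩ := List.exists_mem_of_ne_nil _ hne
        revert he
        induction e using Sym2.ind with
        | _ x y =>
        intro he
        have hdel := (SimpleGraph.adj_and_reachable_delete_edges_iff_exists_cycle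
          (G := G') (v := x) (w := y)).2 ⟨v, c, hc, he⟩
        set G'' := G' \ SimpleGraph.fromEdgeSet {s(x, y)} with hG''
        have hconn : G''.Connected := connected_delete_edge hG' hdel.2
        have hedge : s(x, y) ∈ G'.edgeSet := hdel.1
        have hedgeset : G''.edgeSet = G'.edgeSet \ {s(x, y)} := by
          rw [hG'', SimpleGraph.edgeSet_sdiff, SimpleGraph.edgeSet_fromEdgeSet,
            SimpleGraph.edgeSet_sdiff_sdiff_isDiag]
        have hcount : G''.edgeSet.ncard ≤ k := by
          rw [hedgeset]
          have hfin : G'.edgeSet.Finite := Set.toFinite _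
          have := Set.ncard_diff_singleton_lt_of_mem hedge hfin
          omega
        obtain ⟨T, hT1, hT2⟩ := ih G'' hcount hconn
        exact ⟨T, le_trans hT1 (by rw [hG'']; exact sdiff_le), hT2⟩


end

end ProxAux


open Finset

theorem proximity_le_of_even_order {V : Type*} [Fintype V] [Nonempty V]
    (G : SimpleGraph V) (hG : G.Connected)
    (n : ℕ) (hn : Fintype.card V = n) (hn2 : 2 ≤ n) (heven : Even n) :
    Finset.univ.inf' Finset.univ_nonempty
        (fun v => (∑ u, (G.dist v u : ℝ)) / (n - 1)) ≤
      ((n : ℝ) + 1) / 4 + 1 / (4 * ((n : ℝ) - 1)) := by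
  classical
  obtain ⟨M, hM⟩ := heven
  have hcard : Fintype.card V = 2 * M := by omega
  obtain ⟨T, hTle, hT⟩ := ProxAux.exists_spanning_tree G hG
  obtain ⟨c, hc⟩ := ProxAux.tree_transmission T hT hcard
  have hnat : ∑ u, G.dist c u ≤ M * M := by
    refine le_trans (Finset.sum_le_sum ?_) hc
    intro u _
    exact (hT.isConnected c u).dist_anti hTle
  refine le_trans (Finset.inf'_le _ (Finset.mem_univ c)) ?_
  have hb : (0 : ℝ) < (n : ℝ) - 1 := by
    have : (2 : ℝ) ≤ (n : ℝ) := by exact_mod_cast hn2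
    linarith
  rw [div_le_iff₀ hb]
  have hRHS : (((n : ℝ) + 1) / 4 + 1 / (4 * ((n : ℝ) - 1))) * ((n : ℝ) - 1) =
      ((n : ℝ) * (n : ℝ)) / 4 := by
    field_simp
    ring
  rw [hRHS]
  have h1 : (∑ u, (G.dist c u : ℝ)) = ((∑ u, G.dist c u : ℕ) : ℝ) := by push_cast; ring
  rw [h1]
  have h2 : ((∑ u, G.dist c u : ℕ) : ℝ) ≤ ((M * M : ℕ) : ℝ) := Nat.cast_le.2 hnat
  have h3 : (n : ℝ) = 2 * (M : ℝ) := by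
    have : n = 2 * M := by omega
    rw [this]
    push_cast
    ring
  calc ((∑ u, G.dist c u : ℕ) : ℝ) ≤ ((M * M : ℕ) : ℝ) := h2
    _ = (M : ℝ) * (M : ℝ) := by push_cast; ring
    _ = ((n : ℝ) * (n : ℝ)) / 4 := by rw [h3]; ring
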